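/- There exists an integer k_0 such that for all k ≥ k_0 and every y ∈ [0,1) (with the convention 0·ln 0 = 0), setting A = (1−√y)², B = y·ln y + 2(1−y) − 2(1−√y) + 60·k·(1−y)²/2^k, h(α) = −α·ln α − (1−α)·ln(1−α), and M(α) = (ln 2 − h(α))/(A·α^k + B): for every α with 1 − 3·ln k/k ≤ α ≤ 2^{−1/k}, one has M(α) > M(1). -/
import Mathlib


open Real

noncomputable section

/-- The binary-type entropy `h(α) = −α ln α − (1−α) ln(1−α)`
(with `0 · ln 0 = 0`, automatic since `Real.log 0 = 0`). -/
def hEnt (α : ℝ) : ℝ := -α * Real.log α - (1-α) * Real.log (1-α)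

/-- `M(α) = (ln 2 − h(α))/(A α^k + B)` with `A = (1−√y)²` and
`B = y ln y + 2(1−y) − 2(1−√y) + 60 k (1−y)²/2^k`. -/
def Mfun (k : ℕ) (y α : ℝ) : ℝ :=
  (Real.log 2 - hEnt α) /
    ((1 - Real.sqrt y)^2 * α^k +
      (y * Real.log y + 2*(1-y) - 2*(1-Real.sqrt y) + 60*k*(1-y)^2/(2:ℝ)^k))

lemma sub_one_le_mul_log {t : ℝ} (ht : 0 ≤ t) : t - 1 ≤ t * Real.log t := by
  rcases eq_or_lt_of_le ht with h | h
  · simp [← h]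
  · have h1 : Real.log t⁻¹ ≤ t⁻¹ - 1 := Real.log_le_sub_one_of_pos (by positivity)
    rw [Real.log_inv] at h1
    have h2 : t * (-Real.log t) ≤ t * (t⁻¹ - 1) := by
      exact mul_le_mul_of_nonneg_left h1 ht
    have h3 : t * t⁻¹ = 1 := mul_inv_cancel₀ (ne_of_gt h)
    nlinarith [h2, h3]

lemma nat240 {k : ℕ} (hk : 12 ≤ k) : 240 * k ≤ 2 ^ k := by
  induction k, hk using Nat.le_induction with
  | base => norm_num
  | succ n hn ih =>
    have h1 : 240 ≤ 2 ^ n := le_trans (by norm_num) (Nat.pow_le_pow_right (by norm_num) hn)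
    have : 2 ^ (n+1) = 2^n + 2^n := by ring
    omega

lemma hEnt_one : hEnt 1 = 0 := by simp [hEnt]

set_option maxHeartbeats 2000000 in
/-- Claim 1 of the paper: for all sufficiently large `k` and every `y ∈ [0,1)`,
for every `α` with `1 − 3 ln k/k ≤ α ≤ 2^{−1/k}`, one has `M(α) > M(1)`. -/
theorem M_not_left :
    ∃ k0 : ℕ, ∀ k : ℕ, k0 ≤ k → ∀ y : ℝ, 0 ≤ y → y < 1 →
      ∀ α : ℝ, 1 - 3 * Real.log k / k ≤ α → α ≤ (2:ℝ) ^ (-(1:ℝ)/(k:ℝ)) →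
        Mfun k y 1 < Mfun k y α := by
  use 3600000000
  intro k hk y hy0 hy1 α hα1 hα2
  have hkR : (3600000000:ℝ) ≤ (k:ℝ) := by exact_mod_cast hk
  have hk0R : (0:ℝ) < k := by linarith
  -- sqrt k bounds
  have hsqk : Real.sqrt (k:ℝ) * Real.sqrt (k:ℝ) = (k:ℝ) := Real.mul_self_sqrt (le_of_lt hk0R)
  have hsk : (60000:ℝ) ≤ Real.sqrt k := by
    have h1 : Real.sqrt 3600000000 ≤ Real.sqrt k := Real.sqrt_le_sqrt hkR
    have h2 : Real.sqrt (3600000000:ℝ) = 60000 := by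
      rw [show (3600000000:ℝ) = 60000^2 by norm_num, Real.sqrt_sq (by norm_num)]
    linarith [h2 ▸ h1]
  have hlogk : Real.log k ≤ 2 * Real.sqrt k := by
    have h1 : Real.log (Real.sqrt k) ≤ Real.sqrt k - 1 :=
      Real.log_le_sub_one_of_pos (by positivity)
    rw [Real.log_sqrt (le_of_lt hk0R)] at h1
    linarith
  have hβsmall : 3 * Real.log k / k ≤ 1/10000 := by
    rw [div_le_iff₀ hk0R]
    nlinarith [mul_le_mul_of_nonneg_right hsk (Real.sqrt_nonneg (k:ℝ))]
  -- α bounds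
  have hα0 : (0:ℝ) ≤ α := by linarith
  have hαlt1 : α < 1 := by
    have : (2:ℝ) ^ (-(1:ℝ)/(k:ℝ)) < 1 := by
      apply Real.rpow_lt_one_of_one_lt_of_neg (by norm_num)
      exact div_neg_of_neg_of_pos (by norm_num) hk0R
    linarith
  have hβpos : 0 < 1 - α := by linarith
  have hβle : 1 - α ≤ 1/10000 := by linarith
  have hαk : α ^ k ≤ 1/2 := by
    have h1 : α ^ k ≤ ((2:ℝ) ^ (-(1:ℝ)/(k:ℝ))) ^ k := pow_le_pow_left₀ hα0 hα2 k
    have h2 : ((2:ℝ) ^ (-(1:ℝ)/(k:ℝ))) ^ k = (2:ℝ) ^ ((-(1:ℝ)/(k:ℝ)) * k) := by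
      rw [← Real.rpow_natCast ((2:ℝ) ^ (-(1:ℝ)/(k:ℝ))) k, ← Real.rpow_mul (by norm_num)]
    have h3 : (-(1:ℝ)/(k:ℝ)) * k = -1 := by
      field_simp
    rw [h2, h3] at h1
    rw [Real.rpow_neg_one] at h1
    linarith
  -- entropy bounds
  have hh0 : 0 ≤ hEnt α := by
    unfold hEnt
    have l1 : Real.log α ≤ 0 := Real.log_nonpos hα0 (le_of_lt hαlt1)
    have l2 : Real.log (1-α) ≤ 0 := Real.log_nonpos (by linarith) (by linarith)
    nlinarith [mul_nonneg hα0 (neg_nonneg.2 l1), mul_nonneg (le_of_lt hβpos) (neg_nonneg.2 l2)]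
  have hh3 : hEnt α ≤ 3/100 := by
    set r := Real.sqrt (1-α) with hrdef
    have hr2 : r^2 = 1 - α := Real.sq_sqrt (le_of_lt hβpos)
    have hr0 : 0 < r := Real.sqrt_pos.2 hβpos
    have hr1 : r ≤ 1/100 := by
      have := Real.sqrt_le_sqrt hβle
      rwa [show (1/10000:ℝ) = (1/100)^2 by norm_num, Real.sqrt_sq (by norm_num)] at this
    have hrlog : Real.log (1-α) = 2 * Real.log r := by
      rw [← hr2, Real.log_pow]; push_cast; ring
    have t1 : -α * Real.log α ≤ 1 - α := by
      nlinarith [sub_one_le_mul_log hα0]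
    have t2 : -(1-α) * Real.log (1-α) ≤ 2*r := by
      rw [hrlog]
      nlinarith [mul_le_mul_of_nonneg_left (sub_one_le_mul_log (le_of_lt hr0))
        (by positivity : (0:ℝ) ≤ 2*r), hr2, sq_nonneg r]
    have hβr : 1 - α ≤ r := by nlinarith [hr2, hr0]
    unfold hEnt
    linarith [t1, t2, hβr, hr1]
  -- denominator structure
  set s := Real.sqrt y with hsdef
  clear_value s
  have hs2 : s^2 = y := by rw [hsdef]; exact Real.sq_sqrt hy0
  have hs0 : 0 ≤ s := by rw [hsdef]; exact Real.sqrt_nonneg y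
  have hs1 : s < 1 := by
    rw [hsdef, show (1:ℝ) = Real.sqrt 1 by simp]
    exact Real.sqrt_lt_sqrt hy0 (by linarith)
  have hA : 0 < (1-s)^2 := pow_pos (by linarith) 2
  have h2k : (0:ℝ) < (2:ℝ)^k := by positivity
  have hC : 0 < 60*(k:ℝ)*(1-y)^2/(2:ℝ)^k := by
    have : (0:ℝ) < 1 - y := by linarith
    positivity
  have h240R : (240:ℝ) * k ≤ (2:ℝ)^k := by
    have := nat240 (show 12 ≤ k by omega)
    exact_mod_cast this
  have hy4 : (1-y)^2 ≤ 4 * (1-s)^2 := by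
    have e1 : (1-y)^2 = (1-s)^2*(1+s)^2 := by rw [← hs2]; ring
    have e2 : (1+s)^2 ≤ 4 := by nlinarith
    have := mul_le_mul_of_nonneg_left e2 (le_of_lt hA)
    linarith [e1 ▸ this]
  have hCA : 60*(k:ℝ)*(1-y)^2/(2:ℝ)^k ≤ (1-s)^2 := by
    rw [div_le_iff₀ h2k]
    nlinarith [mul_le_mul_of_nonneg_left hy4 (by positivity : (0:ℝ) ≤ 60*(k:ℝ)),
      mul_le_mul_of_nonneg_right h240R (le_of_lt hA)]
  -- log y bounds
  have hyl : y * Real.log y + 1 - y ≤ (1-y)^2 := by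
    rcases eq_or_lt_of_le hy0 with h | h
    · simp [← h]
    · have : Real.log y ≤ y - 1 := Real.log_le_sub_one_of_pos h
      nlinarith [mul_le_mul_of_nonneg_left this (le_of_lt h)]
  have hAle : (1-s)^2 ≤ y * Real.log y + 1 - y := by
    have hylog : y * Real.log y = 2*s*(s*Real.log s) := by
      rw [← hs2, Real.log_pow]; push_cast; ring
    rw [hylog]
    nlinarith [mul_le_mul_of_nonneg_left (sub_one_le_mul_log hs0)
      (by positivity : (0:ℝ) ≤ 2*s), hs2]
  -- put things together
  set B := y * Real.log y + 2*(1-y) - 2*(1-s) + 60*(k:ℝ)*(1-y)^2/(2:ℝ)^k with hBdef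
  clear_value B
  have hBid : (1-s)^2 + B = y * Real.log y + (1-y) + 60*(k:ℝ)*(1-y)^2/(2:ℝ)^k := by
    rw [hBdef]; nlinarith [hs2]
  have hB : 0 < B := by nlinarith [hAle, hC, hBid]
  have hD1le : (1-s)^2 + B ≤ 5 * (1-s)^2 := by nlinarith [hyl, hCA, hy4, hBid]
  have hposα : 0 < (1-s)^2 * α^k + B :=
    add_pos_of_nonneg_of_pos (mul_nonneg (le_of_lt hA) (pow_nonneg hα0 k)) hB
  have hpos1 : 0 < (1-s)^2 * (1:ℝ)^k + B := by rw [one_pow, mul_one]; linarith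
  have hln2 : (0.6931:ℝ) < Real.log 2 := by
    have := Real.log_two_gt_d9; linarith
  unfold Mfun
  rw [hEnt_one, sub_zero, ← hsdef, ← hBdef, div_lt_div_iff₀ hpos1 hposα]
  have f1 : Real.log 2 * ((1-s)^2 * α^k) ≤ Real.log 2 * ((1-s)^2 * (1/2)) :=
    mul_le_mul_of_nonneg_left (mul_le_mul_of_nonneg_left hαk (le_of_lt hA)) (by linarith)
  have f2 : hEnt α * ((1-s)^2 + B) ≤ hEnt α * (5*(1-s)^2) :=
    mul_le_mul_of_nonneg_left hD1le hh0
  have f3 : 0 < (1-s)^2 * (Real.log 2 * (1/2) - 5 * hEnt α) := by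
    apply mul_pos hA; nlinarith [hh3, hln2]
  rw [one_pow, mul_one]
  nlinarith [f1, f2, f3]


end
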